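/- Fix t, x ∈ ℝ and define the map G_{t,x} on B(ℝ) by G_{t,x}[f](p) = x + ∫ T(p,q) N̂₀(f(q) − v(q)t, q) dq. Under the standing assumptions (including sup_{x,p} |v(p)| n₀(x,p) < ∞), G_{t,x} maps B(ℝ) into B(ℝ) and is a contraction with contraction constant κ₀ := sup_p ∫|T(p,q)| sup_x n₀(x,q) dq < 1: ‖G_{t,x}[f] − G_{t,x}[f']‖_∞ ≤ κ₀ ‖f − f'‖_∞. Consequently, by the Banach fixed-point theorem, for every t,x there is a unique X̂(t,x,·) ∈ B(ℝ) with X̂(t,x,p) = x + ∫ T(p,q) N̂₀(X̂(t,x,q) − v(q)t, q) dq for all p. -/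

import Mathlib

open MeasureTheory Filter

/-- The map `G_{t,x}[f](p) = x + ∫ T(p,q) N̂₀(f(q) - v(q)t, q) dq` maps
`B(ℝ)` to `B(ℝ)` and is a contraction with constant
`κ₀ = sup_p ∫|T(p,q)| sup_x n₀(x,q) dq < 1`; consequently, by the Banach fixed-point
theorem, for every `t,x` there is a unique bounded measurable `X̂(t,x,·)` with
`X̂(t,x,p) = x + ∫ T(p,q) N̂₀(X̂(t,x,q) - v(q)t, q) dq` for all `p`. -/
theorem stmt_8
    (T : ℝ → ℝ → ℝ) (n₀ : ℝ → ℝ → ℝ) (v : ℝ → ℝ) (N0 : ℝ → ℝ → ℝ) (κ₀ Cv : ℝ)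
    (hT_meas : Measurable (Function.uncurry T))
    (hT_int : ∀ p, Integrable (fun q => T p q))
    (hT_op : ∃ M, ∀ p, (∫ q, |T p q|) ≤ M)
    (hn_meas : Measurable (Function.uncurry n₀))
    (hn_nonneg : ∀ x p, 0 ≤ n₀ x p)
    (hn_bdd : ∃ C, ∀ x p, n₀ x p ≤ C)
    (hsup_meas : Measurable (fun q => ⨆ x, n₀ x q))
    (hv_meas : Measurable v)
    (hCv : ∀ x p, |v p| * n₀ x p ≤ Cv)
    (hN0_meas : Measurable (Function.uncurry N0))
    (hN0_zero : ∀ q, N0 0 q = 0)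
    (hN0_lip : ∀ q a b, |N0 a q - N0 b q| ≤ (⨆ x, n₀ x q) * |a - b|)
    (hκ₀ : κ₀ = ⨆ p, ∫ q, |T p q| * ⨆ x, n₀ x q)
    (hκ₀_lt : κ₀ < 1) :
    -- G_{t,x} maps B(ℝ) into B(ℝ):
    (∀ t x : ℝ, ∀ f : ℝ → ℝ, Measurable f → (∃ C, ∀ q, |f q| ≤ C) →
      ∃ C, ∀ p, |x + ∫ q, T p q * N0 (f q - v q * t) q| ≤ C) ∧
    -- G_{t,x} is a contraction with constant κ₀:
    (∀ t x : ℝ, ∀ f f' : ℝ → ℝ, ∀ D : ℝ,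
      Measurable f → Measurable f' →
      (∃ C, ∀ q, |f q| ≤ C) → (∃ C, ∀ q, |f' q| ≤ C) →
      (∀ q, |f q - f' q| ≤ D) →
      ∀ p, |(x + ∫ q, T p q * N0 (f q - v q * t) q)
             - (x + ∫ q, T p q * N0 (f' q - v q * t) q)| ≤ κ₀ * D) ∧
    -- existence and uniqueness of the fixed point:
    (∀ t x : ℝ, ∃ Xh : ℝ → ℝ, Measurable Xh ∧ (∃ C, ∀ p, |Xh p| ≤ C) ∧
      (∀ p, Xh p = x + ∫ q, T p q * N0 (Xh q - v q * t) q) ∧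
      (∀ Y : ℝ → ℝ, Measurable Y → (∃ C, ∀ p, |Y p| ≤ C) →
        (∀ p, Y p = x + ∫ q, T p q * N0 (Y q - v q * t) q) → Y = Xh)) := by
  obtain ⟨M, hM⟩ := hT_op
  obtain ⟨C, hC⟩ := hn_bdd
  set s : ℝ → ℝ := fun q => ⨆ x, n₀ x q with hs_def
  have hs_bdd : ∀ q, BddAbove (Set.range fun x => n₀ x q) := by
    intro q; exact ⟨C, by rintro y ⟨x, rfl⟩; exact hC x q⟩
  have hs_le : ∀ q, s q ≤ C := fun q => ciSup_le (fun x => hC x q)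
  have hs_nonneg : ∀ q, 0 ≤ s q := fun q => le_trans (hn_nonneg 0 q) (le_ciSup (hs_bdd q) 0)
  have hC0 : 0 ≤ C := le_trans (hs_nonneg 0) (hs_le 0)
  have hM0 : 0 ≤ M := le_trans (integral_nonneg (fun q => abs_nonneg _)) (hM 0)
  have hCv0 : 0 ≤ Cv := le_trans (mul_nonneg (abs_nonneg _) (hn_nonneg 0 0)) (hCv 0 0)
  have hvs : ∀ q, |v q| * s q ≤ Cv := by
    intro q
    rcases eq_or_lt_of_le (abs_nonneg (v q)) with h | h
    · rw [← h, zero_mul]; exact hCv0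
    · rw [mul_comm, ← le_div_iff₀ h]
      exact ciSup_le fun x => (le_div_iff₀ h).mpr (by rw [mul_comm]; exact hCv x q)
  have hN0_bound : ∀ a q, |N0 a q| ≤ s q * |a| := by
    intro a q; simpa [hN0_zero q] using hN0_lip q a 0
  have hT_slice : ∀ p, Measurable (fun q => T p q) :=
    fun p => hT_meas.comp measurable_prodMk_left
  have habs_int : ∀ (f : ℝ → ℝ), |∫ q, f q| ≤ ∫ q, |f q| := by
    intro f; simpa [Real.norm_eq_abs] using norm_integral_le_integral_norm f
  -- measurability of the composed integrand
  have hcomp_meas : ∀ (t : ℝ) (f : ℝ → ℝ), Measurable f →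
      Measurable (fun q => N0 (f q - v q * t) q) := by
    intro t f hmf
    exact hN0_meas.comp ((hmf.sub (hv_meas.mul_const t)).prodMk measurable_id)
  -- pointwise bound on the integrand
  have hptw : ∀ (t : ℝ) (f : ℝ → ℝ) (Cf : ℝ), (∀ q, |f q| ≤ Cf) →
      ∀ p q, |T p q * N0 (f q - v q * t) q| ≤ (C * Cf + Cv * |t|) * |T p q| := by
    intro t f Cf hbf p q
    rw [abs_mul]
    have h1 : |N0 (f q - v q * t) q| ≤ C * Cf + Cv * |t| := by
      calc |N0 (f q - v q * t) q| ≤ s q * |f q - v q * t| := hN0_bound _ q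
        _ ≤ s q * (|f q| + |v q| * |t|) := by
            refine mul_le_mul_of_nonneg_left ?_ (hs_nonneg q)
            rw [← abs_mul]; exact abs_sub _ _
        _ = s q * |f q| + (|v q| * s q) * |t| := by ring
        _ ≤ C * Cf + Cv * |t| := by
            refine add_le_add ?_ (mul_le_mul_of_nonneg_right (hvs q) (abs_nonneg t))
            have h0 : 0 ≤ Cf := le_trans (abs_nonneg _) (hbf 0)
            exact mul_le_mul (hs_le q) (hbf q) (abs_nonneg _) hC0
    calc |T p q| * |N0 (f q - v q * t) q| ≤ |T p q| * (C * Cf + Cv * |t|) :=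
          mul_le_mul_of_nonneg_left h1 (abs_nonneg _)
      _ = (C * Cf + Cv * |t|) * |T p q| := by ring
  -- integrability of the integrand
  have key_int : ∀ (t : ℝ) (f : ℝ → ℝ) (Cf : ℝ), Measurable f → (∀ q, |f q| ≤ Cf) →
      ∀ p, Integrable (fun q => T p q * N0 (f q - v q * t) q) := by
    intro t f Cf hmf hbf p
    refine (((hT_int p).abs).const_mul (C * Cf + Cv * |t|)).mono'
      (((hT_slice p).mul (hcomp_meas t f hmf)).aestronglyMeasurable) ?_
    exact Eventually.of_forall fun q => by
      rw [Real.norm_eq_abs]; exact hptw t f Cf hbf p q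
  -- bound on the integral
  have key_bound : ∀ (t : ℝ) (f : ℝ → ℝ) (Cf : ℝ), Measurable f → (∀ q, |f q| ≤ Cf) →
      ∀ p, |∫ q, T p q * N0 (f q - v q * t) q| ≤ (C * Cf + Cv * |t|) * M := by
    intro t f Cf hmf hbf p
    have hK : 0 ≤ C * Cf + Cv * |t| := by
      have h0 : 0 ≤ Cf := le_trans (abs_nonneg _) (hbf 0)
      positivity
    calc |∫ q, T p q * N0 (f q - v q * t) q| ≤ ∫ q, |T p q * N0 (f q - v q * t) q| :=
          habs_int _
      _ ≤ ∫ q, (C * Cf + Cv * |t|) * |T p q| := by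
          refine integral_mono (key_int t f Cf hmf hbf p).abs
            (((hT_int p).abs).const_mul _) ?_
          exact fun q => hptw t f Cf hbf p q
      _ = (C * Cf + Cv * |t|) * ∫ q, |T p q| := integral_const_mul _ _
      _ ≤ (C * Cf + Cv * |t|) * M := mul_le_mul_of_nonneg_left (hM p) hK
  -- integrability and κ₀ facts
  have hints : ∀ p, Integrable (fun q => |T p q| * s q) := by
    intro p
    refine (((hT_int p).abs).const_mul C).mono'
      (((hT_slice p).abs.mul hsup_meas).aestronglyMeasurable) ?_
    refine Eventually.of_forall fun q => ?_
    rw [Real.norm_eq_abs, abs_mul, abs_abs, abs_of_nonneg (hs_nonneg q), mul_comm C]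
    exact mul_le_mul_of_nonneg_left (hs_le q) (abs_nonneg _)
  have hIle : ∀ p, (∫ q, |T p q| * s q) ≤ C * M := by
    intro p
    calc (∫ q, |T p q| * s q) ≤ ∫ q, C * |T p q| := by
          refine integral_mono (hints p) (((hT_int p).abs).const_mul C) fun q => ?_
          rw [mul_comm C]; exact mul_le_mul_of_nonneg_left (hs_le q) (abs_nonneg _)
      _ = C * ∫ q, |T p q| := integral_const_mul _ _
      _ ≤ C * M := mul_le_mul_of_nonneg_left (hM p) hC0
  have hκ_ge : ∀ p, (∫ q, |T p q| * s q) ≤ κ₀ := by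
    intro p
    rw [hκ₀]
    exact le_ciSup ⟨C * M, by rintro y ⟨p', rfl⟩; exact hIle p'⟩ p
  have hκ₀_nonneg : 0 ≤ κ₀ :=
    le_trans (integral_nonneg fun q => mul_nonneg (abs_nonneg _) (hs_nonneg q)) (hκ_ge 0)
  -- contraction estimate
  have key_contr : ∀ (t : ℝ) (f f' : ℝ → ℝ) (D : ℝ), Measurable f → Measurable f' →
      (∃ Cf, ∀ q, |f q| ≤ Cf) → (∃ Cf, ∀ q, |f' q| ≤ Cf) → (∀ q, |f q - f' q| ≤ D) →
      ∀ p, |(∫ q, T p q * N0 (f q - v q * t) q) - ∫ q, T p q * N0 (f' q - v q * t) q|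
        ≤ κ₀ * D := by
    intro t f f' D hmf hmf' hbfe hbfe' hD p
    obtain ⟨Cf, hbf⟩ := hbfe
    obtain ⟨Cf', hbf'⟩ := hbfe'
    have hD0 : 0 ≤ D := le_trans (abs_nonneg _) (hD 0)
    rw [← integral_sub (key_int t f Cf hmf hbf p) (key_int t f' Cf' hmf' hbf' p)]
    have hptw2 : ∀ q, |T p q * N0 (f q - v q * t) q - T p q * N0 (f' q - v q * t) q|
        ≤ (|T p q| * s q) * D := by
      intro q
      have hl := hN0_lip q (f q - v q * t) (f' q - v q * t)
      rw [show (f q - v q * t) - (f' q - v q * t) = f q - f' q by ring] at hl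
      calc |T p q * N0 (f q - v q * t) q - T p q * N0 (f' q - v q * t) q|
          = |T p q| * |N0 (f q - v q * t) q - N0 (f' q - v q * t) q| := by
            rw [← mul_sub, abs_mul]
        _ ≤ |T p q| * (s q * |f q - f' q|) :=
            mul_le_mul_of_nonneg_left hl (abs_nonneg _)
        _ ≤ |T p q| * (s q * D) :=
            mul_le_mul_of_nonneg_left
              (mul_le_mul_of_nonneg_left (hD q) (hs_nonneg q)) (abs_nonneg _)
        _ = (|T p q| * s q) * D := by ring
    calc |∫ q, (T p q * N0 (f q - v q * t) q - T p q * N0 (f' q - v q * t) q)|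
        ≤ ∫ q, |T p q * N0 (f q - v q * t) q - T p q * N0 (f' q - v q * t) q| := habs_int _
      _ ≤ ∫ q, (|T p q| * s q) * D := by
          refine integral_mono ((((key_int t f Cf hmf hbf p)).sub
            (key_int t f' Cf' hmf' hbf' p)).abs) ((hints p).mul_const D) hptw2
      _ = (∫ q, |T p q| * s q) * D := integral_mul_const _ _
      _ ≤ κ₀ * D := mul_le_mul_of_nonneg_right (hκ_ge p) hD0
  -- measurability of G f
  have hGmeas : ∀ (t x : ℝ) (f : ℝ → ℝ), Measurable f →
      Measurable (fun p => x + ∫ q, T p q * N0 (f q - v q * t) q) := by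
    intro t x f hmf
    refine measurable_const.add ?_
    have hm : StronglyMeasurable
        (fun pq : ℝ × ℝ => T pq.1 pq.2 * N0 (f pq.2 - v pq.2 * t) pq.2) :=
      (hT_meas.mul ((hcomp_meas t f hmf).comp measurable_snd)).stronglyMeasurable
    exact hm.integral_prod_right'.measurable
  refine ⟨?_, ?_, ?_⟩
  · -- Part 1
    intro t x f hmf ⟨Cf, hbf⟩
    exact ⟨|x| + (C * Cf + Cv * |t|) * M, fun p =>
      le_trans (abs_add_le x _) (add_le_add_right (key_bound t f Cf hmf hbf p) _)⟩
  · -- Part 2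
    intro t x f f' D hmf hmf' hbf hbf' hD p
    rw [add_sub_add_left_eq_sub]
    exact key_contr t f f' D hmf hmf' hbf hbf' hD p
  · -- Part 3
    intro t x
    let F : ℕ → ℝ → ℝ := fun n => n.rec (fun _ => x)
      (fun _ fn => fun p => x + ∫ q, T p q * N0 (fn q - v q * t) q)
    have hFs : ∀ n, F (n + 1) = fun p => x + ∫ q, T p q * N0 (F n q - v q * t) q :=
      fun n => rfl
    have hFsp : ∀ n p, F (n + 1) p = x + ∫ q, T p q * N0 (F n q - v q * t) q :=
      fun n p => rfl
    have hF0 : ∀ p, F 0 p = x := fun p => rfl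
    set d₀ : ℝ := (C * |x| + Cv * |t|) * M with hd₀
    have hd₀0 : 0 ≤ d₀ := by positivity
    have main : ∀ n, Measurable (F n) ∧ (∃ Cf, ∀ p, |F n p| ≤ Cf) ∧
        (∀ p, |F (n + 1) p - F n p| ≤ κ₀ ^ n * d₀) := by
      intro n
      induction n with
      | zero =>
        refine ⟨measurable_const, ⟨|x|, fun p => le_rfl⟩, fun p => ?_⟩
        have e : F (0 + 1) p - F 0 p = ∫ q, T p q * N0 (F 0 q - v q * t) q := by
          rw [hFsp 0 p, hF0 p]; ring
        rw [e, pow_zero, one_mul, hd₀]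
        exact key_bound t (F 0) |x| measurable_const (fun q => le_rfl) p
      | succ n ih =>
        obtain ⟨hm, ⟨Cf, hb⟩, hstep⟩ := ih
        have hm1 : Measurable (F (n + 1)) := by
          rw [hFs n]; exact hGmeas t x (F n) hm
        have hb1 : ∃ Cf, ∀ p, |F (n + 1) p| ≤ Cf := by
          refine ⟨|x| + (C * Cf + Cv * |t|) * M, fun p => ?_⟩
          rw [hFsp n p]
          exact le_trans (abs_add_le x _) (add_le_add_right (key_bound t (F n) Cf hm hb p) _)
        refine ⟨hm1, hb1, fun p => ?_⟩
        have h := key_contr t (F (n + 1)) (F n) (κ₀ ^ n * d₀) hm1 hm hb1 ⟨Cf, hb⟩ hstep p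
        rw [hFsp (n + 1) p, hFsp n p, add_sub_add_left_eq_sub]
        calc |(∫ q, T p q * N0 (F (n + 1) q - v q * t) q)
            - ∫ q, T p q * N0 (F n q - v q * t) q| ≤ κ₀ * (κ₀ ^ n * d₀) := h
          _ = κ₀ ^ (n + 1) * d₀ := by ring
    have hgeom : ∀ m, (∑ i ∈ Finset.range m, κ₀ ^ i) ≤ (1 - κ₀)⁻¹ := by
      intro m
      calc (∑ i ∈ Finset.range m, κ₀ ^ i) ≤ ∑' i, κ₀ ^ i :=
            Summable.sum_le_tsum _ (fun i _ => pow_nonneg hκ₀_nonneg i)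
              (summable_geometric_of_lt_one hκ₀_nonneg hκ₀_lt)
        _ = (1 - κ₀)⁻¹ := tsum_geometric_of_lt_one hκ₀_nonneg hκ₀_lt
    set E : ℝ := d₀ * (1 - κ₀)⁻¹ with hE
    have hE0 : 0 ≤ E := mul_nonneg hd₀0 (inv_nonneg.mpr (by linarith))
    have hdist : ∀ m n p, |F (n + m) p - F n p|
        ≤ (∑ i ∈ Finset.range m, κ₀ ^ (n + i)) * d₀ := by
      intro m
      induction m with
      | zero => intro n p; simp
      | succ m ih =>
        intro n p
        have h1 : |F (n + (m + 1)) p - F (n + 1) p|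
            ≤ (∑ i ∈ Finset.range m, κ₀ ^ (n + 1 + i)) * d₀ := by
          have h := ih (n + 1) p
          rwa [show n + 1 + m = n + (m + 1) by ring] at h
        have h2 : |F (n + 1) p - F n p| ≤ κ₀ ^ n * d₀ := (main n).2.2 p
        calc |F (n + (m + 1)) p - F n p|
            ≤ |F (n + (m + 1)) p - F (n + 1) p| + |F (n + 1) p - F n p| := abs_sub_le _ _ _
          _ ≤ (∑ i ∈ Finset.range m, κ₀ ^ (n + 1 + i)) * d₀ + κ₀ ^ n * d₀ := add_le_add h1 h2
          _ = ((∑ i ∈ Finset.range m, κ₀ ^ (n + 1 + i)) + κ₀ ^ n) * d₀ := by ring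
          _ = (∑ i ∈ Finset.range (m + 1), κ₀ ^ (n + i)) * d₀ := by
              congr 1
              rw [Finset.sum_range_succ' (fun i => κ₀ ^ (n + i)) m]
              simp only [add_zero]
              congr 1
              exact Finset.sum_congr rfl fun i _ => by
                rw [show n + (i + 1) = n + 1 + i by omega]
    have hdistE : ∀ n m p, |F (n + m) p - F n p| ≤ κ₀ ^ n * E := by
      intro n m p
      calc |F (n + m) p - F n p| ≤ (∑ i ∈ Finset.range m, κ₀ ^ (n + i)) * d₀ := hdist m n p
        _ = κ₀ ^ n * ((∑ i ∈ Finset.range m, κ₀ ^ i) * d₀) := by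
            simp only [pow_add]; rw [← Finset.mul_sum]; ring
        _ ≤ κ₀ ^ n * ((1 - κ₀)⁻¹ * d₀) := by
            refine mul_le_mul_of_nonneg_left ?_ (pow_nonneg hκ₀_nonneg n)
            exact mul_le_mul_of_nonneg_right (hgeom m) hd₀0
        _ = κ₀ ^ n * E := by rw [hE]; ring
    have hcauchy : ∀ p, CauchySeq (fun n => F n p) := by
      intro p
      refine cauchySeq_of_le_geometric κ₀ d₀ hκ₀_lt fun n => ?_
      rw [Real.dist_eq, abs_sub_comm]
      calc |F (n + 1) p - F n p| ≤ κ₀ ^ n * d₀ := (main n).2.2 p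
        _ = d₀ * κ₀ ^ n := mul_comm _ _
    have hlim : ∀ p, ∃ l, Tendsto (fun n => F n p) atTop (nhds l) :=
      fun p => cauchySeq_tendsto_of_complete (hcauchy p)
    set Xh : ℝ → ℝ := fun p => (hlim p).choose with hXh
    have htend : ∀ p, Tendsto (fun n => F n p) atTop (nhds (Xh p)) :=
      fun p => (hlim p).choose_spec
    have hXmeas : Measurable Xh :=
      measurable_of_tendsto_metrizable (fun n => (main n).1) (tendsto_pi_nhds.mpr htend)
    have hXdist : ∀ n p, |Xh p - F n p| ≤ κ₀ ^ n * E := by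
      intro n p
      have h2 : Tendsto (fun m => F (n + m) p) atTop (nhds (Xh p)) := by
        refine (((htend p).comp (tendsto_add_atTop_nat n)).congr fun m => ?_)
        simp [add_comm]
      have h1 : Tendsto (fun m => |F (n + m) p - F n p|) atTop (nhds (|Xh p - F n p|)) :=
        (h2.sub tendsto_const_nhds).abs
      exact le_of_tendsto h1 (Eventually.of_forall fun m => hdistE n m p)
    have hXbdd : ∀ p, |Xh p| ≤ |x| + E := by
      intro p
      have h0 := hXdist 0 p
      rw [pow_zero, one_mul, hF0 p] at h0
      have habs : |Xh p| ≤ |Xh p - x| + |x| := by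
        simpa using abs_add_le (Xh p - x) x
      linarith
    have hXfix : ∀ p, Xh p = x + ∫ q, T p q * N0 (Xh q - v q * t) q := by
      intro p
      have hb : ∀ n : ℕ, |Xh p - (x + ∫ q, T p q * N0 (Xh q - v q * t) q)|
          ≤ (2 * E * κ₀) * κ₀ ^ n := by
        intro n
        have h1 : |Xh p - F (n + 1) p| ≤ κ₀ ^ (n + 1) * E := hXdist (n + 1) p
        have h2 : |(∫ q, T p q * N0 (F n q - v q * t) q)
            - ∫ q, T p q * N0 (Xh q - v q * t) q| ≤ κ₀ * (κ₀ ^ n * E) :=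
          key_contr t (F n) Xh (κ₀ ^ n * E) (main n).1 hXmeas (main n).2.1
            ⟨|x| + E, hXbdd⟩ (fun q => by rw [abs_sub_comm]; exact hXdist n q) p
        have h3 : F (n + 1) p - (x + ∫ q, T p q * N0 (Xh q - v q * t) q)
            = (∫ q, T p q * N0 (F n q - v q * t) q)
              - ∫ q, T p q * N0 (Xh q - v q * t) q := by
          rw [hFsp n p]; ring
        calc |Xh p - (x + ∫ q, T p q * N0 (Xh q - v q * t) q)|
            ≤ |Xh p - F (n + 1) p|
              + |F (n + 1) p - (x + ∫ q, T p q * N0 (Xh q - v q * t) q)| := abs_sub_le _ _ _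
          _ ≤ κ₀ ^ (n + 1) * E + κ₀ * (κ₀ ^ n * E) := add_le_add h1 (by rw [h3]; exact h2)
          _ = (2 * E * κ₀) * κ₀ ^ n := by ring
      have htend0 : Tendsto (fun n : ℕ => (2 * E * κ₀) * κ₀ ^ n) atTop (nhds 0) := by
        simpa using
          (tendsto_pow_atTop_nhds_zero_of_lt_one hκ₀_nonneg hκ₀_lt).const_mul (2 * E * κ₀)
      have hle : |Xh p - (x + ∫ q, T p q * N0 (Xh q - v q * t) q)| ≤ 0 :=
        ge_of_tendsto' htend0 hb
      exact sub_eq_zero.mp (abs_eq_zero.mp (le_antisymm hle (abs_nonneg _)))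
    refine ⟨Xh, hXmeas, ⟨|x| + E, hXbdd⟩, hXfix, ?_⟩
    intro Y hYm hYb hYfix
    obtain ⟨CY, hYbd⟩ := hYb
    have hiter : ∀ n : ℕ, ∀ p, |Y p - Xh p| ≤ (CY + (|x| + E)) * κ₀ ^ n := by
      intro n
      induction n with
      | zero =>
        intro p
        rw [pow_zero, mul_one]
        calc |Y p - Xh p| ≤ |Y p| + |Xh p| := abs_sub _ _
          _ ≤ CY + (|x| + E) := add_le_add (hYbd p) (hXbdd p)
      | succ n ih =>
        intro p
        have h := key_contr t Y Xh ((CY + (|x| + E)) * κ₀ ^ n) hYm hXmeas ⟨CY, hYbd⟩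
          ⟨|x| + E, hXbdd⟩ ih p
        rw [hYfix p, hXfix p, add_sub_add_left_eq_sub]
        calc |(∫ q, T p q * N0 (Y q - v q * t) q)
            - ∫ q, T p q * N0 (Xh q - v q * t) q|
            ≤ κ₀ * ((CY + (|x| + E)) * κ₀ ^ n) := h
          _ = (CY + (|x| + E)) * κ₀ ^ (n + 1) := by ring
    funext p
    have htend0 : Tendsto (fun n : ℕ => (CY + (|x| + E)) * κ₀ ^ n) atTop (nhds 0) := by
      simpa using
        (tendsto_pow_atTop_nhds_zero_of_lt_one hκ₀_nonneg hκ₀_lt).const_mul (CY + (|x| + E))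
    have hle : |Y p - Xh p| ≤ 0 := ge_of_tendsto' htend0 (fun n => hiter n p)
    exact sub_eq_zero.mp (abs_eq_zero.mp (le_antisymm hle (abs_nonneg _)))
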